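/- The conditional min-entropy is strongly subadditive: for every density operator ρ_ABC on H_A ⊗ H_B ⊗ H_C, H_min(A|B)_{ρ_AB} ≥ H_min(A|BC)_{ρ_ABC}, where ρ_AB = tr_C ρ_ABC. -/

import Mathlib

open Matrix
open scoped Kronecker ComplexConjugate ComplexOrder

noncomputable section

/-- Partial trace over the first (A) subsystem. -/
def ptraceA {A B : Type*} [Fintype A] (M : Matrix (A × B) (A × B) ℂ) :
    Matrix B B ℂ :=
  Matrix.of fun i j => ∑ a : A, M (a, i) (a, j)

/-- Partial trace over the second (B) subsystem. -/
def ptraceB {A B : Type*} [Fintype B] (M : Matrix (A × B) (A × B) ℂ) :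
    Matrix A A ℂ :=
  Matrix.of fun i j => ∑ b : B, M (i, b) (j, b)

/-- A density operator: positive semidefinite with unit trace. -/
def IsDensity {n : Type*} [Fintype n] (ρ : Matrix n n ℂ) : Prop :=
  ρ.PosSemidef ∧ ρ.trace = 1

/-- Conditional min-entropy `H_min(A|B)_ρ = - inf_σ D_∞(ρ ‖ id_A ⊗ σ)`, where the
infimum ranges over density operators `σ` on `B` and
`D_∞(τ‖τ') = inf {λ | τ ≤ 2^λ τ'}`. -/
def Hmin {A B : Type*} [Fintype A] [Fintype B] [DecidableEq A] [DecidableEq B]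
    (ρ : Matrix (A × B) (A × B) ℂ) : ℝ :=
  - sInf {l : ℝ | ∃ σ : Matrix B B ℂ, IsDensity σ ∧
      (((2 : ℝ) ^ l : ℝ) • ((1 : Matrix A A ℂ) ⊗ₖ σ) - ρ).PosSemidef}

open scoped Classical in
/-- Positive semidefinite square root (junk value `0` off the PSD cone). -/
def psqrt {n : Type*} [Fintype n] [DecidableEq n] (M : Matrix n n ℂ) : Matrix n n ℂ :=
  if h : M.PosSemidef then
    (h.1.eigenvectorUnitary : Matrix n n ℂ) * diagonal ((↑) ∘ (Real.sqrt ·) ∘ h.1.eigenvalues) *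
      (star h.1.eigenvectorUnitary : Matrix n n ℂ) else 0

/-- Trace norm `‖M‖₁ = tr √(Mᴴ M)`. -/
def traceNorm {n : Type*} [Fintype n] [DecidableEq n] (M : Matrix n n ℂ) : ℝ :=
  (psqrt (Mᴴ * M)).trace.re

/-- Fidelity `F(ρ,σ) = ‖√ρ √σ‖₁`. -/
def fidelity {n : Type*} [Fintype n] [DecidableEq n] (ρ σ : Matrix n n ℂ) : ℝ :=
  traceNorm (psqrt ρ * psqrt σ)

/-- Choi matrix of a linear map on matrices. -/
def choi {B A' : Type*} [Fintype B] [DecidableEq B] [Fintype A']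
    (F : Matrix B B ℂ →ₗ[ℂ] Matrix A' A' ℂ) : Matrix (B × A') (B × A') ℂ :=
  Matrix.of fun p q => (F (Matrix.single p.1 q.1 1)) p.2 q.2

/-- A quantum operation (CPTP map): completely positive (PSD Choi matrix, by Choi's
theorem) and trace-preserving. -/
def IsCPTP {B A' : Type*} [Fintype B] [DecidableEq B] [Fintype A']
    (F : Matrix B B ℂ →ₗ[ℂ] Matrix A' A' ℂ) : Prop :=
  (choi F).PosSemidef ∧ ∀ M : Matrix B B ℂ, (F M).trace = M.trace

/-- The map `id_A ⊗ F` applied to a bipartite operator. -/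
def idTensor {A B A' : Type*} [Fintype B]
    (F : Matrix B B ℂ →ₗ[ℂ] Matrix A' A' ℂ) (ρ : Matrix (A × B) (A × B) ℂ) :
    Matrix (A × A') (A × A') ℂ :=
  Matrix.of fun p q => (F (Matrix.of fun b b' => ρ (p.1, b) (q.1, b'))) p.2 q.2

/-- The quadratic form `⟨ψ|M|ψ⟩` (real part). -/
def pureOverlap {n : Type*} [Fintype n] (ψ : n → ℂ) (M : Matrix n n ℂ) : ℝ :=
  (∑ p, ∑ q, conj (ψ p) * M p q * ψ q).re

/-- The maximally entangled state `|Φ⟩ = d^{-1/2} ∑ₓ |x⟩|x⟩`. -/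
def maxEnt (A : Type*) [Fintype A] [DecidableEq A] : A × A → ℂ :=
  fun p => if p.1 = p.2 then ((Real.sqrt (Fintype.card A))⁻¹ : ℝ) else 0

/-- `q_corr(A|B)_ρ`: `d_A` times the maximal squared fidelity with the maximally
entangled state achievable by quantum operations on `B`. -/
def qcorr {A B : Type*} [Fintype A] [Fintype B] [DecidableEq A] [DecidableEq B]
    (ρ : Matrix (A × B) (A × B) ℂ) : ℝ :=
  (Fintype.card A : ℝ) *
    sSup {x : ℝ | ∃ F : Matrix B B ℂ →ₗ[ℂ] Matrix A A ℂ, IsCPTP F ∧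
      x = pureOverlap (maxEnt A) (idTensor F ρ)}

/-- The completely mixed state. -/
def mixed (A : Type*) [Fintype A] [DecidableEq A] : Matrix A A ℂ :=
  ((Fintype.card A : ℂ)⁻¹) • (1 : Matrix A A ℂ)

/-- `q_decpl(A|B)_ρ`: `d_A` times the maximal squared fidelity with `τ_A ⊗ σ_B`. -/
def qdecpl {A B : Type*} [Fintype A] [Fintype B] [DecidableEq A] [DecidableEq B]
    (ρ : Matrix (A × B) (A × B) ℂ) : ℝ :=
  (Fintype.card A : ℝ) *
    sSup {x : ℝ | ∃ σ : Matrix B B ℂ, IsDensity σ ∧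
      x = (fidelity ρ ((mixed A) ⊗ₖ σ)) ^ 2}

/-- Reduced state `tr_C |ψ⟩⟨ψ|` of a pure state `ψ` on `(A ⊗ B) ⊗ C`. -/
def redL {S C : Type*} [Fintype C] (ψ : S × C → ℂ) : Matrix S S ℂ :=
  Matrix.of fun s s' => ∑ c, ψ (s, c) * conj (ψ (s', c))

/-- Reduced state `tr_B |ψ⟩⟨ψ|` on `A ⊗ C` of a pure state `ψ` on `(A ⊗ B) ⊗ C`. -/
def redAC {A B C : Type*} [Fintype B] (ψ : (A × B) × C → ℂ) :
    Matrix (A × C) (A × C) ℂ :=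
  Matrix.of fun p q => ∑ b, ψ ((p.1, b), p.2) * conj (ψ ((q.1, b), q.2))


/-- Partial trace over the `C` subsystem of an operator on `A ⊗ (B ⊗ C)`. -/
def traceOutC {A B C : Type*} [Fintype C]
    (ρ : Matrix (A × (B × C)) (A × (B × C)) ℂ) : Matrix (A × B) (A × B) ℂ :=
  Matrix.of fun p q => ∑ c, ρ (p.1, (p.2, c)) (q.1, (q.2, c))


section StrongSubadditivityAux

open Finset

variable {A B C : Type*}

private lemma ptraceB_posSemidef' [Fintype A] [Fintype B] [DecidableEq B]
    {M : Matrix (A × B) (A × B) ℂ} (hM : M.PosSemidef) : (ptraceB M).PosSemidef := by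
  refine Matrix.PosSemidef.of_dotProduct_mulVec_nonneg ?_ ?_
  · ext i j
    simp only [conjTranspose_apply, ptraceB, Matrix.of_apply, star_sum]
    exact Finset.sum_congr rfl fun b _ => congrFun (congrFun hM.1 (i, b)) (j, b)
  · intro x
    have e1 : ∀ f : B → A → A → ℂ,
        (∑ a : A, ∑ a' : A, ∑ b : B, f b a a') = ∑ b : B, ∑ a : A, ∑ a' : A, f b a a' :=
      fun f => (Finset.sum_congr rfl fun a _ => Finset.sum_comm).trans Finset.sum_comm
    have key : star x ⬝ᵥ (ptraceB M *ᵥ x) =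
        ∑ b : B, star (fun p : A × B => if p.2 = b then x p.1 else 0) ⬝ᵥ
          (M *ᵥ fun p : A × B => if p.2 = b then x p.1 else 0) := by
      have lhs : star x ⬝ᵥ (ptraceB M *ᵥ x) =
          ∑ a : A, ∑ a' : A, ∑ b : B, star (x a) * (M (a, b) (a', b) * x a') := by
        simp only [dotProduct, mulVec, ptraceB, Matrix.of_apply, Pi.star_apply,
          Finset.sum_mul, Finset.mul_sum]
      have rhs : ∀ b : B, star (fun p : A × B => if p.2 = b then x p.1 else 0) ⬝ᵥ
          (M *ᵥ fun p : A × B => if p.2 = b then x p.1 else 0) =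
          ∑ a : A, ∑ a' : A, star (x a) * (M (a, b) (a', b) * x a') := by
        intro b
        simp only [dotProduct, mulVec, Pi.star_apply, apply_ite star, star_zero,
          Fintype.sum_prod_type, mul_ite, ite_mul, zero_mul, mul_zero, Finset.mul_sum,
          Finset.sum_ite_irrel, Finset.sum_const_zero, Finset.sum_ite_eq',
          Finset.mem_univ, if_true]
      rw [lhs, e1]
      exact Finset.sum_congr rfl fun b _ => (rhs b).symm
    rw [key]
    exact Finset.sum_nonneg fun b _ => hM.dotProduct_mulVec_nonneg _

private lemma traceOutC_eq_ptraceB [Fintype C]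
    (M : Matrix (A × (B × C)) (A × (B × C)) ℂ) :
    traceOutC M = ptraceB (M.submatrix (Equiv.prodAssoc A B C) (Equiv.prodAssoc A B C)) :=
  rfl

private lemma traceOutC_posSemidef [Fintype A] [Fintype B] [Fintype C] [DecidableEq C]
    {M : Matrix (A × (B × C)) (A × (B × C)) ℂ} (hM : M.PosSemidef) :
    (traceOutC M).PosSemidef := by
  rw [traceOutC_eq_ptraceB]
  exact ptraceB_posSemidef' (hM.submatrix _)

private lemma traceOutC_sub [Fintype C]
    (M N : Matrix (A × (B × C)) (A × (B × C)) ℂ) :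
    traceOutC (M - N) = traceOutC M - traceOutC N := by
  ext p q
  simp [traceOutC, Finset.sum_sub_distrib]

private lemma traceOutC_smul [Fintype C] (r : ℝ)
    (M : Matrix (A × (B × C)) (A × (B × C)) ℂ) :
    traceOutC (r • M) = r • traceOutC M := by
  ext p q
  simp [traceOutC, Finset.mul_sum]

private lemma traceOutC_one_kron [Fintype B] [Fintype C] [DecidableEq A]
    (σ : Matrix (B × C) (B × C) ℂ) :
    traceOutC ((1 : Matrix A A ℂ) ⊗ₖ σ) = (1 : Matrix A A ℂ) ⊗ₖ ptraceB σ := by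
  ext p q
  simp [traceOutC, ptraceB, Matrix.kroneckerMap_apply, Finset.mul_sum]

private lemma trace_traceOutC [Fintype A] [Fintype B] [Fintype C]
    (M : Matrix (A × (B × C)) (A × (B × C)) ℂ) :
    (traceOutC M).trace = M.trace := by
  simp [Matrix.trace, traceOutC, Matrix.diag, Fintype.sum_prod_type]

private lemma trace_ptraceB [Fintype A] [Fintype B]
    (M : Matrix (A × B) (A × B) ℂ) : (ptraceB M).trace = M.trace := by
  simp [Matrix.trace, ptraceB, Matrix.diag, Fintype.sum_prod_type]

private lemma trace_nonneg_of_posSemidef {n : Type*} [Fintype n] [DecidableEq n]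
    {M : Matrix n n ℂ} (hM : M.PosSemidef) : 0 ≤ M.trace := by
  have h : ∀ i : n, 0 ≤ M i i := by
    intro i
    have := hM.dotProduct_mulVec_nonneg (Pi.single i 1)
    simpa [dotProduct, mulVec, Pi.single_apply, Finset.sum_ite_eq, Finset.sum_ite_eq',
      mul_ite, ite_mul, zero_mul, mul_zero, apply_ite star] using this
  exact Finset.sum_nonneg fun i _ => h i

open scoped MatrixOrder in
private lemma posSemidef_one_sub_of_trace {n : Type*} [Fintype n] [DecidableEq n]
    {ρ : Matrix n n ℂ} (hρ : ρ.PosSemidef) (ht : ρ.trace = 1) :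
    ((1 : Matrix n n ℂ) - ρ).PosSemidef := by
  obtain ⟨Bm, hBm⟩ := CStarAlgebra.nonneg_iff_eq_star_mul_self.mp hρ.nonneg
  rw [star_eq_conjTranspose] at hBm
  subst hBm
  have htr : (∑ i : n, ∑ j : n, Complex.normSq (Bm i j)) = 1 := by
    have : (Bmᴴ * Bm).trace = ∑ j : n, ∑ i : n, (Complex.normSq (Bm i j) : ℂ) := by
      simp [Matrix.trace, Matrix.diag, Matrix.mul_apply, Matrix.conjTranspose_apply,
        Complex.normSq_eq_conj_mul_self]
    rw [this] at ht
    have := congrArg Complex.re ht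
    simpa [Complex.ofReal_sum] using (Finset.sum_comm.trans (by exact_mod_cast this))
  refine Matrix.PosSemidef.of_dotProduct_mulVec_nonneg ?_ ?_
  · exact (Matrix.isHermitian_one.sub hρ.isHermitian)
  · intro x
    have expand : star x ⬝ᵥ (((1 : Matrix n n ℂ) - Bmᴴ * Bm) *ᵥ x) =
        ((∑ i : n, Complex.normSq (x i)) - ∑ i : n, Complex.normSq ((Bm *ᵥ x) i) : ℝ) := by
      rw [Matrix.sub_mulVec, dotProduct_sub, Matrix.one_mulVec]
      have h1 : star x ⬝ᵥ x = ((∑ i : n, Complex.normSq (x i) : ℝ) : ℂ) := by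
        simp [dotProduct, Complex.normSq_eq_conj_mul_self]
      have h2 : star x ⬝ᵥ ((Bmᴴ * Bm) *ᵥ x) =
          ((∑ i : n, Complex.normSq ((Bm *ᵥ x) i) : ℝ) : ℂ) := by
        rw [← Matrix.mulVec_mulVec, Matrix.dotProduct_mulVec, ← Matrix.star_mulVec]
        simp [dotProduct, Complex.normSq_eq_conj_mul_self]
      rw [h1, h2]
      push_cast
      ring
    rw [expand]
    rw [Complex.zero_le_real, sub_nonneg]
    have hCS : ∀ i : n, Complex.normSq ((Bm *ᵥ x) i) ≤
        (∑ j : n, Complex.normSq (Bm i j)) * ∑ j : n, Complex.normSq (x j) := by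
      intro i
      have h1 : ‖(Bm *ᵥ x) i‖ ≤ ∑ j : n, ‖Bm i j‖ * ‖x j‖ := by
        refine le_trans (norm_sum_le _ _) ?_
        exact le_of_eq (Finset.sum_congr rfl fun j _ => norm_mul _ _)
      have h2 : (∑ j : n, ‖Bm i j‖ * ‖x j‖) ^ 2 ≤
          (∑ j : n, ‖Bm i j‖ ^ 2) * ∑ j : n, ‖x j‖ ^ 2 :=
        Finset.sum_mul_sq_le_sq_mul_sq _ _ _
      calc Complex.normSq ((Bm *ᵥ x) i) = ‖(Bm *ᵥ x) i‖ ^ 2 :=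
            (Complex.sq_norm _).symm
        _ ≤ (∑ j : n, ‖Bm i j‖ * ‖x j‖) ^ 2 := by
            exact pow_le_pow_left₀ (norm_nonneg _) h1 2
        _ ≤ (∑ j : n, ‖Bm i j‖ ^ 2) * ∑ j : n, ‖x j‖ ^ 2 := h2
        _ = (∑ j : n, Complex.normSq (Bm i j)) * ∑ j : n, Complex.normSq (x j) := by
            simp [Complex.sq_norm]
    calc (∑ i : n, Complex.normSq ((Bm *ᵥ x) i)) ≤
          ∑ i : n, (∑ j : n, Complex.normSq (Bm i j)) * ∑ j : n, Complex.normSq (x j) :=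
        Finset.sum_le_sum fun i _ => hCS i
      _ = (∑ i : n, ∑ j : n, Complex.normSq (Bm i j)) * ∑ j : n, Complex.normSq (x j) := by
        rw [Finset.sum_mul]
      _ = ∑ j : n, Complex.normSq (x j) := by rw [htr, one_mul]

end StrongSubadditivityAux

/-- strong subadditivity of the conditional min-entropy:
`H_min(A|B) ≥ H_min(A|BC)`. -/
theorem stmt14 {A B C : Type*} [Fintype A] [Fintype B] [Fintype C]
    [DecidableEq A] [DecidableEq B] [DecidableEq C]
    (ρ : Matrix (A × (B × C)) (A × (B × C)) ℂ) (hρ : IsDensity ρ) :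
    Hmin (traceOutC ρ) ≥ Hmin ρ := by
  have hne : Nonempty (A × (B × C)) := by
    by_contra h
    rw [not_nonempty_iff] at h
    have h0 : ρ.trace = 0 := by simp [Matrix.trace]
    rw [hρ.2] at h0
    exact one_ne_zero h0
  have hA : Nonempty A := ⟨hne.some.1⟩
  have hBC : Nonempty (B × C) := ⟨hne.some.2⟩
  have hdA : (0 : ℝ) < (Fintype.card A : ℝ) := by exact_mod_cast Fintype.card_pos
  have hdBC : (0 : ℝ) < (Fintype.card (B × C) : ℝ) := by exact_mod_cast Fintype.card_pos
  -- the two sets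
  set SB := {l : ℝ | ∃ σ : Matrix B B ℂ, IsDensity σ ∧
      (((2 : ℝ) ^ l : ℝ) • ((1 : Matrix A A ℂ) ⊗ₖ σ) - traceOutC ρ).PosSemidef} with hSB
  set SBC := {l : ℝ | ∃ σ : Matrix (B × C) (B × C) ℂ, IsDensity σ ∧
      (((2 : ℝ) ^ l : ℝ) • ((1 : Matrix A A ℂ) ⊗ₖ σ) - ρ).PosSemidef} with hSBC
  have hsub : SBC ⊆ SB := by
    rintro l ⟨σ, hσ, hps⟩
    refine ⟨ptraceB σ, ⟨ptraceB_posSemidef' hσ.1, by rw [trace_ptraceB]; exact hσ.2⟩, ?_⟩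
    have h2 : traceOutC (((2 : ℝ) ^ l : ℝ) • ((1 : Matrix A A ℂ) ⊗ₖ σ) - ρ) =
        ((2 : ℝ) ^ l : ℝ) • ((1 : Matrix A A ℂ) ⊗ₖ ptraceB σ) - traceOutC ρ := by
      rw [traceOutC_sub, traceOutC_smul, traceOutC_one_kron]
    exact h2 ▸ traceOutC_posSemidef hps
  have hSBCne : SBC.Nonempty := by
    set d : ℝ := (Fintype.card (B × C) : ℝ) with hd
    have hd0 : ((Fintype.card (B × C) : ℂ)) ≠ 0 := by
      exact_mod_cast (show (Fintype.card (B × C) : ℝ) ≠ 0 from ne_of_gt hdBC)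
    refine ⟨Real.logb 2 d, ((Fintype.card (B × C) : ℂ))⁻¹ • (1 : Matrix (B × C) (B × C) ℂ),
      ⟨⟨?_, ?_⟩, ?_⟩⟩
    · refine Matrix.PosSemidef.of_dotProduct_mulVec_nonneg ?_ ?_
      · ext p q
        simp only [conjTranspose_apply, Matrix.smul_apply, Matrix.one_apply, star_smul,
          apply_ite star, star_one, star_zero, smul_ite, smul_zero]
        by_cases hpq : p = q <;> by_cases hqp : q = p <;>
          simp_all [eq_comm, Complex.star_def, Complex.conj_inv]
      · intro x
        have : star x ⬝ᵥ ((((Fintype.card (B × C) : ℂ))⁻¹ •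
            (1 : Matrix (B × C) (B × C) ℂ)) *ᵥ x) =
            ((Fintype.card (B × C) : ℂ))⁻¹ * (star x ⬝ᵥ ((1 : Matrix (B × C) (B × C) ℂ) *ᵥ x)) := by
          rw [Matrix.smul_mulVec, dotProduct_smul, smul_eq_mul]
        rw [this]
        refine mul_nonneg ?_ (Matrix.PosSemidef.one.dotProduct_mulVec_nonneg x)
        rw [show ((Fintype.card (B × C) : ℂ))⁻¹ = (((Fintype.card (B × C) : ℝ))⁻¹ : ℝ) by
          push_cast; ring]
        rw [Complex.zero_le_real]
        positivity
    · rw [Matrix.trace_smul, Matrix.trace_one, smul_eq_mul]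
      exact inv_mul_cancel₀ hd0
    · have hpow : (2 : ℝ) ^ Real.logb 2 d = d :=
        Real.rpow_logb (by norm_num) (by norm_num) hdBC
      have hker : (1 : Matrix A A ℂ) ⊗ₖ (((Fintype.card (B × C) : ℂ))⁻¹ •
          (1 : Matrix (B × C) (B × C) ℂ)) =
          ((Fintype.card (B × C) : ℂ))⁻¹ • (1 : Matrix (A × (B × C)) (A × (B × C)) ℂ) := by
        rw [Matrix.kronecker_smul, Matrix.one_kronecker_one]
      have key : (((2 : ℝ) ^ Real.logb 2 d : ℝ)) • ((1 : Matrix A A ℂ) ⊗ₖ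
          (((Fintype.card (B × C) : ℂ))⁻¹ • (1 : Matrix (B × C) (B × C) ℂ))) =
          (1 : Matrix (A × (B × C)) (A × (B × C)) ℂ) := by
        rw [hker, hpow]
        ext p q
        simp only [Matrix.smul_apply, smul_eq_mul, Complex.real_smul]
        rw [← mul_assoc]
        rw [show ((d : ℂ) * ((Fintype.card (B × C) : ℂ))⁻¹) = 1 by
          rw [hd]; push_cast
          exact mul_inv_cancel₀ hd0]
        rw [one_mul]
      rw [key]
      exact posSemidef_one_sub_of_trace hρ.1 hρ.2
  have hbdd : BddBelow SB := by
    refine ⟨Real.logb 2 ((Fintype.card A : ℝ))⁻¹, ?_⟩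
    rintro l ⟨σ, hσ, hps⟩
    have htr := trace_nonneg_of_posSemidef hps
    have htrAB : (traceOutC ρ).trace = 1 := by rw [trace_traceOutC, hρ.2]
    have hval : (((2 : ℝ) ^ l : ℝ) • ((1 : Matrix A A ℂ) ⊗ₖ σ) - traceOutC ρ).trace =
        (((2 : ℝ) ^ l * (Fintype.card A : ℝ) - 1 : ℝ) : ℂ) := by
      rw [Matrix.trace_sub, Matrix.trace_smul, Matrix.trace_kronecker, Matrix.trace_one,
        hσ.2, htrAB]
      push_cast
      simp [Complex.real_smul]
    rw [hval, Complex.zero_le_real, sub_nonneg] at htr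
    have h1 : ((Fintype.card A : ℝ))⁻¹ ≤ (2 : ℝ) ^ l := by
      rw [inv_le_iff_one_le_mul₀ hdA]
      linarith [htr]
    have h2 := Real.logb_le_logb_of_le (b := 2) (by norm_num) (by positivity) h1
    rwa [Real.logb_rpow (by norm_num) (by norm_num)] at h2
  rw [Hmin, Hmin, ge_iff_le, neg_le_neg_iff]
  exact csInf_le_csInf hbdd hSBCne hsub

end
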